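/- Let Q_g : S² → ℝ be integrable with ⟨Q_g⟩ = 0, let ρ_g ∈ ℝ, R_g ∈ ℝ³, and let I_rec(Ω, ν) be the decomposed reconstruction with r = Ω·R_g and q = Q_g(Ω). Define ρ̄(ν) := ⟨I_rec(·, ν)⟩ (angular average over S²). Let σ_s : [ν₋, ν₊] → [0, ∞) be measurable with σ_s and σ_s κ integrable, and set σ_{s,g} := (1/Δν) ∫ σ_s dν. Then for every Ω ∈ S², the group scattering term evaluates exactly to ∫_{ν₋}^{ν₊} σ_s(ν) (ρ̄(ν) − I_rec(Ω, ν)) dν = − σ_{s,g} Q_g(Ω) − ( ∫_{ν₋}^{ν₊} σ_s κ dν / K ) · (Ω·R_g). -/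

import Mathlib

open MeasureTheory Real

/-- The surface measure on the unit sphere `S² ⊂ ℝ³`. -/
noncomputable def sphereMeasure :
    Measure (Metric.sphere (0 : EuclideanSpace ℝ (Fin 3)) 1) :=
  (volume : Measure (EuclideanSpace ℝ (Fin 3))).toSphere

namespace GroupScatterAux

open Set Metric Pointwise

abbrev E3 := EuclideanSpace ℝ (Fin 3)
abbrev S2 := Metric.sphere (0 : E3) 1

instance : IsFiniteMeasure sphereMeasure := by
  unfold sphereMeasure; infer_instance

noncomputable def negS : S2 → S2 := fun Ω =>
  ⟨-(Ω : E3), by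
    rw [mem_sphere_zero_iff_norm, norm_neg, ← mem_sphere_zero_iff_norm]; exact Ω.2⟩

lemma continuous_negS : Continuous negS :=
  Continuous.subtype_mk (continuous_subtype_val.neg) _

lemma negS_invol : Function.Involutive negS := fun Ω => Subtype.ext (by simp [negS])

lemma map_negS : Measure.map negS sphereMeasure = sphereMeasure := by
  refine Measure.ext fun s hs => ?_
  rw [Measure.map_apply continuous_negS.measurable hs, sphereMeasure,
    Measure.toSphere_apply' _ (hs.preimage continuous_negS.measurable),
    Measure.toSphere_apply' _ hs]
  congr 1
  have h1 : negS ⁻¹' s = negS '' s :=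
    congrFun (Set.image_eq_preimage_of_inverse negS_invol.leftInverse
      negS_invol.rightInverse).symm s
  have h2 : (Subtype.val '' (negS '' s) : Set E3) = -(Subtype.val '' s) := by
    rw [Set.image_image, ← Set.image_neg_eq_neg, Set.image_image]
    rfl
  rw [h1, h2, Set.smul_neg]
  have : -(Ioo (0:ℝ) 1 • (Subtype.val '' s : Set E3))
      = (-1 : ℝ) • (Ioo (0:ℝ) 1 • (Subtype.val '' s : Set E3)) := by
    rw [neg_smul_set, one_smul]
  rw [this, Measure.addHaar_smul]
  simp

lemma integral_comp_negS (f : S2 → ℝ) (hf : AEStronglyMeasurable f sphereMeasure) :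
    ∫ Ω, f (negS Ω) ∂sphereMeasure = ∫ Ω, f Ω ∂sphereMeasure := by
  conv_rhs => rw [← map_negS]
  rw [integral_map continuous_negS.measurable.aemeasurable]
  rwa [map_negS]

lemma continuous_coord (i : Fin 3) : Continuous (fun Ω : S2 => (Ω : E3) i) :=
  (EuclideanSpace.proj i).continuous.comp continuous_subtype_val

lemma integrable_coord (i : Fin 3) :
    Integrable (fun Ω : S2 => (Ω : E3) i) sphereMeasure := by
  apply Continuous.integrable_of_hasCompactSupport (continuous_coord i)
  exact IsCompact.of_isClosed_subset isCompact_univ (isClosed_tsupport _) (Set.subset_univ _)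

lemma integral_coord (i : Fin 3) :
    ∫ Ω : S2, (Ω : E3) i ∂sphereMeasure = 0 := by
  have h := integral_comp_negS (fun Ω => (Ω : E3) i)
    (continuous_coord i).aestronglyMeasurable
  have h2 : ∀ Ω : S2, ((negS Ω : S2) : E3) i = -((Ω : E3) i) := fun Ω => by simp [negS]
  simp_rw [h2] at h
  rw [integral_neg] at h
  linarith

lemma sphereMeasure_univ : sphereMeasure Set.univ = ENNReal.ofReal (4 * π) := by
  rw [sphereMeasure, Measure.toSphere_apply_univ, EuclideanSpace.volume_ball]
  have hcard : (Fintype.card (Fin 3) : ℝ) = 3 := by simp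
  have hΓ : Real.Gamma ((Fintype.card (Fin 3) : ℝ) / 2 + 1) = 3 / 4 * Real.sqrt π := by
    rw [hcard]
    have : (3:ℝ)/2 + 1 = 1/2 + 1 + 1 := by norm_num
    rw [this, Real.Gamma_add_one (by norm_num), Real.Gamma_add_one (by norm_num),
      Real.Gamma_one_half_eq]
    ring
  have hsq : Real.sqrt π ^ 3 = π * Real.sqrt π := by
    rw [pow_succ, sq_sqrt pi_pos.le]
  have hsqrt_ne : Real.sqrt π ≠ 0 := by positivity
  have hval : Real.sqrt π ^ Fintype.card (Fin 3)
      / Real.Gamma ((Fintype.card (Fin 3) : ℝ) / 2 + 1) = 4 / 3 * π := by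
    rw [hΓ]
    simp only [Fintype.card_fin]
    rw [hsq]
    field_simp
  rw [hval]
  have hdim : Module.finrank ℝ E3 = 3 := finrank_euclideanSpace_fin
  rw [hdim, ENNReal.ofReal_one, one_pow, one_mul,
    show ((3:ℕ) : ENNReal) = ENNReal.ofReal 3 by simp,
    ← ENNReal.ofReal_mul (by norm_num)]
  congr 1
  ring

lemma sphereMeasure_univ_toReal : (sphereMeasure Set.univ).toReal = 4 * π := by
  rw [sphereMeasure_univ, ENNReal.toReal_ofReal (by positivity)]

lemma integral_decomp (Rg : Fin 3 → ℝ) (Qg : S2 → ℝ)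
    (hQgInt : Integrable Qg sphereMeasure)
    (hQg0 : ∫ Ω, Qg Ω ∂sphereMeasure = 0) (c a b : ℝ) :
    ∫ Ω : S2, (c + a * (∑ i : Fin 3, (Ω : E3) i * Rg i) + b * Qg Ω) ∂sphereMeasure
      = c * (4 * π) := by
  have hsum : Integrable (fun Ω : S2 => ∑ i : Fin 3, (Ω : E3) i * Rg i) sphereMeasure :=
    integrable_finset_sum _ (fun i _ => (integrable_coord i).mul_const _)
  have e1 : ∫ Ω : S2, (c + a * (∑ i : Fin 3, (Ω : E3) i * Rg i) + b * Qg Ω) ∂sphereMeasure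
      = (∫ Ω : S2, (c + a * (∑ i : Fin 3, (Ω : E3) i * Rg i)) ∂sphereMeasure)
        + ∫ Ω : S2, b * Qg Ω ∂sphereMeasure :=
    integral_add ((integrable_const c).add (hsum.const_mul a)) (hQgInt.const_mul b)
  have e2 : ∫ Ω : S2, (c + a * (∑ i : Fin 3, (Ω : E3) i * Rg i)) ∂sphereMeasure
      = (∫ _Ω : S2, c ∂sphereMeasure)
        + ∫ Ω : S2, a * (∑ i : Fin 3, (Ω : E3) i * Rg i) ∂sphereMeasure :=
    integral_add (integrable_const c) (hsum.const_mul a)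
  rw [e1, e2, integral_const, integral_const_mul, integral_const_mul,
    integral_finset_sum _ (fun i _ => (integrable_coord i).mul_const _)]
  simp_rw [integral_mul_const]
  simp [integral_coord, hQg0, measureReal_def, sphereMeasure_univ_toReal, mul_comm]

end GroupScatterAux

/-- The group scattering term of the decomposed reconstruction evaluates exactly to
`∫ σ_s (ρ̄ − I_rec) dν = − σ_{s,g} Q_g(Ω) − (∫ σ_s κ / K) (Ω·R_g)`, where
`ρ̄(ν)` is the angular average of the reconstruction. -/
theorem group_scattering_term_eval
    (ν₁ ν₂ : ℝ) (hν₀ : 0 ≤ ν₁) (hν : ν₁ < ν₂)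
    (B ω₁ ω₂ κ : ℝ → ℝ)
    (hB : IntervalIntegrable B volume ν₁ ν₂)
    (hω₁int : IntervalIntegrable ω₁ volume ν₁ ν₂)
    (hω₂int : IntervalIntegrable ω₂ volume ν₁ ν₂)
    (hκint : IntervalIntegrable κ volume ν₁ ν₂)
    (hκpos : ∀ ν ∈ Set.Icc ν₁ ν₂, 0 < κ ν)
    (hKpos : 0 < ∫ ν in ν₁..ν₂, κ ν)
    (ρg : ℝ) (Rg : Fin 3 → ℝ)
    (Qg : Metric.sphere (0 : EuclideanSpace ℝ (Fin 3)) 1 → ℝ)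
    (hQgInt : Integrable Qg sphereMeasure)
    (hQg0 : (4 * π)⁻¹ * ∫ Ω, Qg Ω ∂sphereMeasure = 0)
    (σs : ℝ → ℝ) (hσsMeas : Measurable σs) (hσsNonneg : ∀ ν, 0 ≤ σs ν)
    (hσsInt : IntervalIntegrable σs volume ν₁ ν₂)
    (hσsκ : IntervalIntegrable (fun ν => σs ν * κ ν) volume ν₁ ν₂)
    (sρ : ℝ → ℝ)
    (hsρ : ∀ ν, sρ ν = (ν₂ - ν₁) * B ν - ω₂ ν * (∫ ν' in ν₁..ν₂, B ν'))
    (sR : Metric.sphere (0 : EuclideanSpace ℝ (Fin 3)) 1 → ℝ → ℝ)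
    (hsR : ∀ Ω ν, sR Ω ν = ((ν₂ - ν₁) * κ ν / (∫ ν' in ν₁..ν₂, κ ν') - 1) *
      (∑ i : Fin 3, (Ω : EuclideanSpace ℝ (Fin 3)) i * Rg i))
    (Irec : Metric.sphere (0 : EuclideanSpace ℝ (Fin 3)) 1 → ℝ → ℝ)
    (hIrec : ∀ Ω ν, Irec Ω ν = (ν₂ - ν₁)⁻¹ *
      (ω₁ ν * ρg + (∑ i : Fin 3, (Ω : EuclideanSpace ℝ (Fin 3)) i * Rg i) + Qg Ω
        + sρ ν + sR Ω ν))
    (ρbar : ℝ → ℝ)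
    (hρbar : ∀ ν, ρbar ν = (4 * π)⁻¹ * ∫ Ω, Irec Ω ν ∂sphereMeasure) :
    ∀ Ω : Metric.sphere (0 : EuclideanSpace ℝ (Fin 3)) 1,
      (∫ ν in ν₁..ν₂, σs ν * (ρbar ν - Irec Ω ν))
        = -(((ν₂ - ν₁)⁻¹ * ∫ ν in ν₁..ν₂, σs ν) * Qg Ω)
          - ((∫ ν in ν₁..ν₂, σs ν * κ ν) / (∫ ν in ν₁..ν₂, κ ν)) *
            (∑ i : Fin 3, (Ω : EuclideanSpace ℝ (Fin 3)) i * Rg i) := by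
  intro Ω
  have hπ : (0:ℝ) < π := pi_pos
  have hΔ : ν₂ - ν₁ ≠ 0 := sub_ne_zero.2 hν.ne'
  have hK : (∫ ν in ν₁..ν₂, κ ν) ≠ 0 := hKpos.ne'
  have hQ0 : ∫ Ω', Qg Ω' ∂sphereMeasure = 0 :=
    (mul_eq_zero.mp hQg0).resolve_left (inv_ne_zero (by positivity))
  have hIrec' : ∀ (Ω' : Metric.sphere (0 : EuclideanSpace ℝ (Fin 3)) 1) (ν : ℝ),
      Irec Ω' ν = (ν₂ - ν₁)⁻¹ * (ω₁ ν * ρg + sρ ν)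
        + (κ ν / ∫ ν' in ν₁..ν₂, κ ν')
          * (∑ i : Fin 3, (Ω' : EuclideanSpace ℝ (Fin 3)) i * Rg i)
        + (ν₂ - ν₁)⁻¹ * Qg Ω' := by
    intro Ω' ν
    rw [hIrec, hsR]
    field_simp
    ring
  have hρbar' : ∀ ν, ρbar ν = (ν₂ - ν₁)⁻¹ * (ω₁ ν * ρg + sρ ν) := by
    intro ν
    rw [hρbar]
    have : ∫ Ω', Irec Ω' ν ∂sphereMeasure
        = ((ν₂ - ν₁)⁻¹ * (ω₁ ν * ρg + sρ ν)) * (4 * π) := by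
      rw [integral_congr_ae (Filter.Eventually.of_forall fun Ω' => hIrec' Ω' ν)]
      exact GroupScatterAux.integral_decomp Rg Qg hQgInt hQ0 _ _ _
    rw [this]
    field_simp
  have hpt : ∀ ν, σs ν * (ρbar ν - Irec Ω ν)
      = (-((ν₂ - ν₁)⁻¹ * Qg Ω)) * σs ν
        + (-((∑ i : Fin 3, (Ω : EuclideanSpace ℝ (Fin 3)) i * Rg i)
            / ∫ ν' in ν₁..ν₂, κ ν')) * (σs ν * κ ν) := by
    intro ν
    rw [hρbar', hIrec']
    ring
  rw [intervalIntegral.integral_congr (fun ν _ => hpt ν),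
    intervalIntegral.integral_add ((hσsInt.const_mul _)) (hσsκ.const_mul _),
    intervalIntegral.integral_const_mul, intervalIntegral.integral_const_mul]
  ring
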